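/- Let H ⊆ ℝ be a bounded, countably infinite set, let m = liminf H and M = limsup H, and let l be chosen with m ≤ l ≤ M. Then there exists an injective sequence (a_n) with {a_n : n ∈ ℕ} = H such that lim_{n→∞} (a_1 + ⋯ + a_n)/n = l. -/

import Mathlib

open Filter Topology

/-- The set of accumulation points of `H`. -/
def accPts (H : Set ℝ) : Set ℝ := {x | AccPt x (𝓟 H)}

namespace CesaroEnum

lemma accPt_ball_infinite {H : Set ℝ} {x : ℝ} (h : AccPt x (𝓟 H)) {ε : ℝ} (hε : 0 < ε) :
    (H ∩ Metric.ball x ε).Infinite := by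
  by_contra hfin
  rw [Set.not_infinite] at hfin
  have hF : ((H ∩ Metric.ball x ε) \ {x}).Finite := hfin.diff
  have hxF : x ∉ (H ∩ Metric.ball x ε) \ {x} := fun hx => hx.2 rfl
  have hU : Metric.ball x ε ∩ ((H ∩ Metric.ball x ε) \ {x})ᶜ ∈ 𝓝 x :=
    Filter.inter_mem (Metric.ball_mem_nhds x hε)
      (hF.isClosed.isOpen_compl.mem_nhds hxF)
  obtain ⟨y, ⟨⟨hy1, hy2⟩, hyH⟩, hyx⟩ := accPt_iff_nhds.mp h _ hU
  exact hy2 ⟨⟨hyH, hy1⟩, hyx⟩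

lemma exists_pick {H : Set ℝ} {x : ℝ} (h : AccPt x (𝓟 H)) (s : Finset ℝ) {ε : ℝ} (hε : 0 < ε) :
    ∃ y, y ∈ H ∧ y ∉ s ∧ |y - x| < ε := by
  obtain ⟨y, hy⟩ := ((accPt_ball_infinite h hε).diff s.finite_toSet).nonempty
  refine ⟨y, hy.1.1, hy.2, ?_⟩
  have := hy.1.2
  rwa [Metric.mem_ball, Real.dist_eq] at this

lemma exists_unused {H : Set ℝ} (e : ℕ ≃ ↥H) (L : List ℝ) : ∃ j : ℕ, (e j : ℝ) ∉ L := by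
  by_contra hcon
  push_neg at hcon
  have hinj : Function.Injective (fun j : ℕ => (e j : ℝ)) :=
    Subtype.val_injective.comp e.injective
  exact (Set.infinite_range_of_injective hinj)
    (L.finite_toSet.subset (Set.range_subset_iff.2 hcon))

open Classical in
noncomputable def unusedIdx {H : Set ℝ} (e : ℕ ≃ ↥H) (L : List ℝ) : ℕ :=
  Nat.find (exists_unused e L)

open Classical in
lemma unusedIdx_spec {H : Set ℝ} (e : ℕ ≃ ↥H) (L : List ℝ) :
    (e (unusedIdx e L) : ℝ) ∉ L := Nat.find_spec (exists_unused e L)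

open Classical in
lemma unusedIdx_min {H : Set ℝ} (e : ℕ ≃ ↥H) (L : List ℝ) {j : ℕ} (hj : j < unusedIdx e L) :
    (e j : ℝ) ∈ L := not_not.mp (Nat.find_min (exists_unused e L) hj)

open Classical in
lemma unusedIdx_le {H : Set ℝ} (e : ℕ ≃ ↥H) (L : List ℝ) {k : ℕ} (hk : (e k : ℝ) ∉ L) :
    unusedIdx e L ≤ k := Nat.find_min' (exists_unused e L) hk

variable {H : Set ℝ}

noncomputable def nextElt (e : ℕ ≃ ↥H) (l : ℝ) {α β : ℝ}
    (hα : AccPt α (𝓟 H)) (hβ : AccPt β (𝓟 H)) (L : List ℝ) : ℝ :=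
  if Nat.sqrt L.length * Nat.sqrt L.length = L.length then
    (e (unusedIdx e L) : ℝ)
  else if L.sum < l * L.length then
    (exists_pick hβ L.toFinset
      (show (0:ℝ) < 1 / (L.length + 1) by positivity)).choose
  else
    (exists_pick hα L.toFinset
      (show (0:ℝ) < 1 / (L.length + 1) by positivity)).choose

noncomputable def buildList (e : ℕ ≃ ↥H) (l : ℝ) {α β : ℝ}
    (hα : AccPt α (𝓟 H)) (hβ : AccPt β (𝓟 H)) : ℕ → List ℝ
  | 0 => []
  | n + 1 => buildList e l hα hβ n ++ [nextElt e l hα hβ (buildList e l hα hβ n)]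

noncomputable def seq (e : ℕ ≃ ↥H) (l : ℝ) {α β : ℝ}
    (hα : AccPt α (𝓟 H)) (hβ : AccPt β (𝓟 H)) (n : ℕ) : ℝ :=
  nextElt e l hα hβ (buildList e l hα hβ n)

variable (e : ℕ ≃ ↥H) (l : ℝ) {α β : ℝ} (hα : AccPt α (𝓟 H)) (hβ : AccPt β (𝓟 H))

lemma buildList_succ (n : ℕ) :
    buildList e l hα hβ (n + 1) = buildList e l hα hβ n ++ [seq e l hα hβ n] := rfl

lemma length_buildList (n : ℕ) : (buildList e l hα hβ n).length = n := by
  induction n with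
  | zero => rfl
  | succ n ih => rw [buildList_succ, List.length_append, ih]; rfl

lemma mem_buildList {x : ℝ} (n : ℕ) :
    x ∈ buildList e l hα hβ n ↔ ∃ i < n, seq e l hα hβ i = x := by
  induction n with
  | zero => simp [buildList]
  | succ n ih =>
    rw [buildList_succ, List.mem_append, ih, List.mem_singleton]
    constructor
    · rintro (⟨i, hi, rfl⟩ | rfl)
      · exact ⟨i, Nat.lt_succ_of_lt hi, rfl⟩
      · exact ⟨n, Nat.lt_succ_self n, rfl⟩
    · rintro ⟨i, hi, rfl⟩
      rcases Nat.lt_succ_iff_lt_or_eq.mp hi with h | rfl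
      · exact Or.inl ⟨i, h, rfl⟩
      · exact Or.inr rfl

lemma sum_buildList (n : ℕ) :
    (buildList e l hα hβ n).sum = ∑ i ∈ Finset.range n, seq e l hα hβ i := by
  induction n with
  | zero => simp [buildList]
  | succ n ih =>
    rw [buildList_succ, List.sum_append, List.sum_singleton, ih, Finset.sum_range_succ]

lemma seq_mem (n : ℕ) :
    seq e l hα hβ n ∈ H ∧ seq e l hα hβ n ∉ buildList e l hα hβ n := by
  rw [seq, nextElt]
  split_ifs with h1 h2
  · exact ⟨(e _).2, unusedIdx_spec e _⟩
  · have hs := (exists_pick hβ (buildList e l hα hβ n).toFinset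
      (show (0:ℝ) < 1 / ((buildList e l hα hβ n).length + 1) by positivity)).choose_spec
    exact ⟨hs.1, fun hm => hs.2.1 (List.mem_toFinset.mpr hm)⟩
  · have hs := (exists_pick hα (buildList e l hα hβ n).toFinset
      (show (0:ℝ) < 1 / ((buildList e l hα hβ n).length + 1) by positivity)).choose_spec
    exact ⟨hs.1, fun hm => hs.2.1 (List.mem_toFinset.mpr hm)⟩

lemma seq_injective : Function.Injective (seq e l hα hβ) := by
  intro i j hij
  by_contra hne
  wlog h : i < j generalizing i j
  · exact this hij.symm (Ne.symm hne) (by omega)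
  · exact (seq_mem e l hα hβ j).2
      ((mem_buildList e l hα hβ j).mpr ⟨i, h, hij⟩) |>.elim
    
lemma seq_isSq {n : ℕ}
    (h : Nat.sqrt n * Nat.sqrt n = n) :
    seq e l hα hβ n = (e (unusedIdx e (buildList e l hα hβ n)) : ℝ) := by
  rw [seq, nextElt, if_pos (by rwa [length_buildList])]

lemma seq_near_beta {n : ℕ}
    (h1 : ¬ (Nat.sqrt n * Nat.sqrt n = n))
    (h2 : (buildList e l hα hβ n).sum < l * n) :
    |seq e l hα hβ n - β| < 1 / ((n : ℝ) + 1) := by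
  have h1' : ¬ (Nat.sqrt (buildList e l hα hβ n).length * Nat.sqrt (buildList e l hα hβ n).length
      = (buildList e l hα hβ n).length) := by rwa [length_buildList]
  have h2' : (buildList e l hα hβ n).sum < l * ((buildList e l hα hβ n).length : ℝ) := by
    rwa [length_buildList]
  rw [seq, nextElt, if_neg h1', if_pos h2']
  have hs := (exists_pick hβ (buildList e l hα hβ n).toFinset
      (show (0:ℝ) < 1 / ((buildList e l hα hβ n).length + 1) by positivity)).choose_spec
  refine lt_of_lt_of_eq hs.2.2 ?_
  rw [length_buildList]

lemma seq_near_alpha {n : ℕ}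
    (h1 : ¬ (Nat.sqrt n * Nat.sqrt n = n))
    (h2 : ¬ ((buildList e l hα hβ n).sum < l * n)) :
    |seq e l hα hβ n - α| < 1 / ((n : ℝ) + 1) := by
  have h1' : ¬ (Nat.sqrt (buildList e l hα hβ n).length * Nat.sqrt (buildList e l hα hβ n).length
      = (buildList e l hα hβ n).length) := by rwa [length_buildList]
  have h2' : ¬ ((buildList e l hα hβ n).sum < l * ((buildList e l hα hβ n).length : ℝ)) := by
    rwa [length_buildList]
  rw [seq, nextElt, if_neg h1', if_neg h2']
  have hs := (exists_pick hα (buildList e l hα hβ n).toFinset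
      (show (0:ℝ) < 1 / ((buildList e l hα hβ n).length + 1) by positivity)).choose_spec
  refine lt_of_lt_of_eq hs.2.2 ?_
  rw [length_buildList]

noncomputable def uIdx (n : ℕ) : ℕ := unusedIdx e (buildList e l hα hβ n)

lemma uIdx_mono {n m : ℕ} (h : n ≤ m) : uIdx e l hα hβ n ≤ uIdx e l hα hβ m := by
  apply unusedIdx_le
  intro hmem
  apply unusedIdx_spec e (buildList e l hα hβ m)
  obtain ⟨i, hi, hie⟩ := (mem_buildList e l hα hβ n).mp hmem
  exact (mem_buildList e l hα hβ m).mpr ⟨i, lt_of_lt_of_le hi h, hie⟩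

lemma uIdx_lt_succ {n : ℕ} (h : Nat.sqrt n * Nat.sqrt n = n) :
    uIdx e l hα hβ n < uIdx e l hα hβ (n + 1) := by
  have hne : uIdx e l hα hβ (n + 1) ≠ uIdx e l hα hβ n := by
    intro heq
    apply unusedIdx_spec e (buildList e l hα hβ (n + 1))
    rw [uIdx] at heq
    rw [heq, buildList_succ, List.mem_append, List.mem_singleton]
    exact Or.inr (seq_isSq e l hα hβ h).symm
  exact lt_of_le_of_ne (uIdx_mono e l hα hβ (Nat.le_succ n)) (Ne.symm hne)

lemma uIdx_grow (k : ℕ) : k + 1 ≤ uIdx e l hα hβ (k * k + 1) := by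
  induction k with
  | zero =>
    have h := uIdx_lt_succ e l hα hβ (n := 0) rfl
    norm_num at h ⊢
    omega
  | succ k ih =>
    have h1 : uIdx e l hα hβ (k * k + 1) ≤ uIdx e l hα hβ ((k+1) * (k+1)) :=
      uIdx_mono e l hα hβ (by nlinarith)
    have h2 : uIdx e l hα hβ ((k+1) * (k+1)) < uIdx e l hα hβ ((k+1) * (k+1) + 1) :=
      uIdx_lt_succ e l hα hβ (by rw [Nat.sqrt_eq])
    omega

lemma seq_surj {x : ℝ} (hx : x ∈ H) : ∃ n, seq e l hα hβ n = x := by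
  set j := e.symm ⟨x, hx⟩ with hj
  have hej : (e j : ℝ) = x := by rw [hj, Equiv.apply_symm_apply]
  have hjlt : j < uIdx e l hα hβ (j * j + 1) := lt_of_lt_of_le (Nat.lt_succ_self j)
    (uIdx_grow e l hα hβ j)
  have := unusedIdx_min e (buildList e l hα hβ (j * j + 1)) hjlt
  rw [hej] at this
  obtain ⟨i, _, hie⟩ := (mem_buildList e l hα hβ (j * j + 1)).mp this
  exact ⟨i, hie⟩

/-- number of squares below n -/
noncomputable def sqCount (n : ℕ) : ℕ :=
  ((Finset.range n).filter (fun i => Nat.sqrt i * Nat.sqrt i = i)).card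

lemma sqCount_succ (n : ℕ) : sqCount (n + 1) =
    if Nat.sqrt n * Nat.sqrt n = n then sqCount n + 1 else sqCount n := by
  rw [sqCount, sqCount, Finset.range_add_one, Finset.filter_insert]
  split_ifs with h
  · rw [Finset.card_insert_of_notMem (by simp)]
  · rfl

lemma sqCount_le (n : ℕ) : sqCount n ≤ Nat.sqrt n + 1 := by
  have : sqCount n ≤ (Finset.range (Nat.sqrt n + 1)).card := by
    apply Finset.card_le_card_of_injOn Nat.sqrt
    · intro i hi
      rw [Finset.mem_coe, Finset.mem_filter, Finset.mem_range] at hi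
      rw [Finset.mem_coe, Finset.mem_range, Nat.lt_succ_iff]
      exact Nat.sqrt_le_sqrt (le_of_lt hi.1)
    · intro i hi j hj hij
      rw [Finset.coe_filter, Set.mem_setOf_eq] at hi hj
      rw [← hi.2, ← hj.2, hij]
  simpa using this

lemma tendsto_sqrt_div : Tendsto (fun n : ℕ => Real.sqrt n / n) atTop (𝓝 0) := by
  have hsq : Tendsto Real.sqrt atTop atTop := by
    rw [tendsto_atTop_atTop]
    intro b
    refine ⟨max b 0 ^ 2, fun a ha => ?_⟩
    have h1 : Real.sqrt (max b 0 ^ 2) ≤ Real.sqrt a := Real.sqrt_le_sqrt ha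
    rw [Real.sqrt_sq (le_max_right b 0)] at h1
    exact le_trans (le_max_left b 0) h1
  have h1 : Tendsto (fun x : ℝ => (Real.sqrt x)⁻¹) atTop (𝓝 0) :=
    hsq.inv_tendsto_atTop
  have h2 : Tendsto (fun n : ℕ => (Real.sqrt n)⁻¹) atTop (𝓝 0) :=
    h1.comp tendsto_natCast_atTop_atTop
  apply h2.congr'
  filter_upwards [eventually_ge_atTop 1] with n hn
  have hn0 : (0:ℝ) < n := by exact_mod_cast hn
  have hsn : (0:ℝ) < Real.sqrt n := Real.sqrt_pos.mpr hn0
  rw [eq_div_iff hn0.ne']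
  nth_rewrite 2 [← Real.mul_self_sqrt hn0.le]
  rw [inv_mul_cancel_left₀ hsn.ne']

end CesaroEnum


open CesaroEnum in
/-- a bounded countably infinite set can be enumerated so that the
Cesàro means converge to any prescribed `l` with `liminf H ≤ l ≤ limsup H`. -/
theorem exists_enumeration_cesaro_eq (H : Set ℝ) (hbd : Bornology.IsBounded H)
    (hc : H.Countable) (hi : H.Infinite) (l : ℝ)
    (hl₁ : sInf (accPts H) ≤ l) (hl₂ : l ≤ sSup (accPts H)) :
    ∃ a : ℕ → ℝ, Function.Injective a ∧ Set.range a = H ∧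
      Tendsto (fun n => (∑ i ∈ Finset.range n, a i) / (n : ℝ)) atTop (𝓝 l) := by
  classical
  haveI := hc.to_subtype
  haveI := hi.to_subtype
  obtain ⟨d⟩ := nonempty_denumerable ↥H
  let e : ℕ ≃ ↥H := (@Denumerable.eqv ↥H d).symm
  set α := sInf (accPts H) with hαdef
  set β := sSup (accPts H) with hβdef
  have hne : (accPts H).Nonempty := by
    obtain ⟨x, -, hx⟩ := hi.exists_accPt_of_subset_isCompact hbd.isCompact_closure subset_closure
    exact ⟨x, hx⟩
  have hsub : accPts H ⊆ closure H := fun x hx => derivedSet_subset_closure H hx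
  have hbdd : Bornology.IsBounded (accPts H) := hbd.closure.subset hsub
  have hclosed : IsClosed (accPts H) := isClosed_derivedSet H
  have hα : AccPt α (𝓟 H) := hclosed.csInf_mem hne hbdd.bddBelow
  have hβ : AccPt β (𝓟 H) := hclosed.csSup_mem hne hbdd.bddAbove
  obtain ⟨C₀, hC₀⟩ := hbd.subset_closedBall 0
  set C := max C₀ (max |α| |β|) with hCdef
  have hCH : ∀ x ∈ H, |x| ≤ C := by
    intro x hx
    have := hC₀ hx
    rw [Metric.mem_closedBall, Real.dist_eq, sub_zero] at this
    exact le_trans this (le_max_left _ _)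
  have hαC : |α| ≤ C := le_trans (le_max_left _ _) (le_max_right _ _)
  have hβC : |β| ≤ C := le_trans (le_max_right _ _) (le_max_right _ _)
  have hC0 : (0:ℝ) ≤ C := le_trans (abs_nonneg α) hαC
  have hlC : |l| ≤ C := by
    rw [abs_le] at hαC hβC ⊢
    constructor
    · linarith [neg_abs_le α, hαC.1]
    · linarith [le_abs_self β, hβC.2]
  have hlCu := (abs_le.mp hlC)
  refine ⟨seq e l hα hβ, seq_injective e l hα hβ, ?_, ?_⟩
  · ext x
    constructor
    · rintro ⟨n, rfl⟩; exact (seq_mem e l hα hβ n).1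
    · intro hx; exact seq_surj e l hα hβ hx
  -- convergence
  have hT0 : ∀ n : ℕ, (0:ℝ) ≤ ∑ i ∈ Finset.range n, 1/((i:ℝ)+1) :=
    fun n => Finset.sum_nonneg (fun i _ => by positivity)
  have key : ∀ n : ℕ, |(∑ i ∈ Finset.range n, seq e l hα hβ i) - n * l| ≤
      2*C*((sqCount n : ℝ) + 1) + ∑ i ∈ Finset.range n, 1/((i:ℝ)+1) := by
    intro n
    induction n with
    | zero => simp [sqCount]; linarith
    | succ n ih =>
      obtain ⟨ih1, ih2⟩ := abs_le.mp ih
      have haH : seq e l hα hβ n ∈ H := (seq_mem e l hα hβ n).1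
      have haCu := abs_le.mp (hCH _ haH)
      have heps : (0:ℝ) ≤ 1/((n:ℝ)+1) := by positivity
      have hprod : (0:ℝ) ≤ 2*C*(sqCount n : ℝ) :=
        mul_nonneg (by linarith) (Nat.cast_nonneg _)
      have hTn := hT0 n
      have hTsum : (∑ i ∈ Finset.range (n+1), 1/((i:ℝ)+1))
          = (∑ i ∈ Finset.range n, 1/((i:ℝ)+1)) + 1/((n:ℝ)+1) :=
        Finset.sum_range_succ _ _
      have hsplit : (∑ i ∈ Finset.range (n+1), seq e l hα hβ i) - ((n+1 : ℕ) : ℝ) * l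
          = ((∑ i ∈ Finset.range n, seq e l hα hβ i) - n * l) + (seq e l hα hβ n - l) := by
        rw [Finset.sum_range_succ]; push_cast; ring
      rw [hsplit, hTsum]
      by_cases hsq : Nat.sqrt n * Nat.sqrt n = n
      · have hFs : (sqCount (n+1) : ℝ) = (sqCount n : ℝ) + 1 := by
          rw [sqCount_succ, if_pos hsq]; push_cast; ring
        rw [hFs]
        have hY : |seq e l hα hβ n - l| ≤ 2*C :=
          abs_le.mpr ⟨by linarith [hlCu.2, haCu.1], by linarith [hlCu.1, haCu.2]⟩
        refine (abs_add_le _ _).trans ?_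
        linarith [ih, hY, heps]
      · have hFs : (sqCount (n+1) : ℝ) = (sqCount n : ℝ) := by
          rw [sqCount_succ, if_neg hsq]
        rw [hFs, abs_le]
        by_cases hlt : (∑ i ∈ Finset.range n, seq e l hα hβ i) < l * n
        · have hnear := seq_near_beta e l hα hβ hsq
            (by rw [sum_buildList]; exact hlt)
          obtain ⟨hn1, hn2⟩ := abs_lt.mp hnear
          have hD : (∑ i ∈ Finset.range n, seq e l hα hβ i) - n * l < 0 := by
            rw [mul_comm] at hlt; linarith
          have hβl : l ≤ β := hl₂
          constructor
          · linarith [hn1, ih1]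
          · linarith [haCu.2, hlCu.1, hprod, hTn]
        · have hnear := seq_near_alpha e l hα hβ hsq
            (by rw [sum_buildList]; exact hlt)
          obtain ⟨hn1, hn2⟩ := abs_lt.mp hnear
          have hD : (0:ℝ) ≤ (∑ i ∈ Finset.range n, seq e l hα hβ i) - n * l := by
            rw [not_lt, mul_comm] at hlt; linarith
          have hαl : α ≤ l := hl₁
          constructor
          · linarith [haCu.1, hlCu.2, hprod, hTn]
          · linarith [hn2, ih2]
  -- the comparison sequence tends to zero
  have hF_le : ∀ n : ℕ, ((sqCount n : ℝ)) ≤ Real.sqrt n + 1 := by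
    intro n
    have h1 : (sqCount n : ℝ) ≤ ((Nat.sqrt n : ℕ) : ℝ) + 1 := by
      exact_mod_cast sqCount_le n
    have h2 : ((Nat.sqrt n : ℕ) : ℝ) ≤ Real.sqrt n := Real.nat_sqrt_le_real_sqrt
    linarith
  have hg1 : Tendsto (fun n : ℕ => 2*C*((sqCount n : ℝ)+1)/n) atTop (𝓝 0) := by
    apply squeeze_zero' (g := fun n : ℕ => 2*C*(Real.sqrt n + 2)/n)
    · filter_upwards with n
      apply div_nonneg _ (Nat.cast_nonneg n)
      have : (0:ℝ) ≤ (sqCount n : ℝ) + 1 := by positivity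
      nlinarith
    · filter_upwards [eventually_ge_atTop 1] with n hn
      have hn0 : (0:ℝ) < n := by exact_mod_cast hn
      apply (div_le_div_iff_of_pos_right hn0).mpr
      apply mul_le_mul_of_nonneg_left _ (by linarith : (0:ℝ) ≤ 2*C)
      linarith [hF_le n]
    · have h2n := tendsto_const_div_atTop_nhds_zero_nat (2:ℝ)
      have hcomb := (tendsto_sqrt_div.add h2n).const_mul (2*C)
      have := hcomb.congr (fun n => by ring :
        ∀ n : ℕ, 2*C*(Real.sqrt n / n + 2 / n) = 2*C*(Real.sqrt n + 2)/n)
      simpa using this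
  have hg2 : Tendsto (fun n : ℕ => (∑ i ∈ Finset.range n, 1/((i:ℝ)+1))/n) atTop (𝓝 0) := by
    have h := tendsto_one_div_add_atTop_nhds_zero_nat.cesaro
    exact h.congr (fun n => inv_mul_eq_div _ _)
  have hg : Tendsto (fun n : ℕ => (2*C*((sqCount n : ℝ)+1) + ∑ i ∈ Finset.range n, 1/((i:ℝ)+1))/n)
      atTop (𝓝 0) := by
    have := hg1.add hg2
    rw [add_zero] at this
    exact this.congr (fun n => (add_div _ _ _).symm)
  rw [tendsto_iff_dist_tendsto_zero]
  apply squeeze_zero' (Eventually.of_forall fun n => dist_nonneg) _ hg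
  filter_upwards [eventually_ge_atTop 1] with n hn
  have hn0 : (0:ℝ) < n := by exact_mod_cast hn
  rw [Real.dist_eq]
  have heq : (∑ i ∈ Finset.range n, seq e l hα hβ i)/(n:ℝ) - l
      = ((∑ i ∈ Finset.range n, seq e l hα hβ i) - n * l)/(n:ℝ) := by
    field_simp
  rw [heq, abs_div, abs_of_pos hn0]
  exact (div_le_div_iff_of_pos_right hn0).mpr (key n)
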